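/- For every n ≥ 1, the number of 2-path pairs of length (n, n) and distance 1 equals the n-th Catalan number: |𝒫^{2,0}_{n,1}| = C_n = (1/(n+1)) · C(2n, n). -/

import Mathlib

/-- A step of a lattice path: `E = (1,0)` or `N = (0,1)`. -/
inductive Step : Type
  | E | N
deriving DecidableEq, Repr

instance : Fintype Step :=
  ⟨{Step.E, Step.N}, fun x => by cases x <;> simp⟩

/-- The terminal point of a lattice path starting at `(0,0)`. -/
def endpoint (γ : List Step) : ℤ × ℤ :=
  ((γ.count Step.E : ℤ), (γ.count Step.N : ℤ))

/-- The set of lattice points visited by a lattice path starting at `(0,0)`. -/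
def vertices (γ : List Step) : Set (ℤ × ℤ) :=
  {p | ∃ i ≤ γ.length, endpoint (γ.take i) = p}

/-- The bottom-path condition: `γ = E N^{b₁} E N^{b₂} ⋯ E N^{b_m}` where every
`bᵢ ≡ k - 2 (mod k - 1)`. -/
def kGoodBottom (k : ℕ) (γ : List Step) : Prop :=
  ∃ bs : List ℕ, (∀ b ∈ bs, b % (k - 1) = (k - 2) % (k - 1)) ∧
    γ = (bs.map fun b => Step.E :: List.replicate b Step.N).flatten

/-- `γ₁` stays weakly above `γ₂`: no visited point of `γ₂` lies strictly above a
visited point of `γ₁` with the same `x`-coordinate. -/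
def weaklyAbove (γ₁ γ₂ : List Step) : Prop :=
  ∀ p ∈ vertices γ₁, ∀ q ∈ vertices γ₂, p.1 = q.1 → q.2 ≤ p.2

/-- The set `𝒫^{k,ε}_{n,δ}` of `k`-path pairs of length `((k-1)n - ε, (k-1)n)`
and distance `δ`. -/
def PathPairs (k n ε δ : ℕ) : Set (List Step × List Step) :=
  {p | p.1.length = (k - 1) * n - ε ∧ p.1.head? = some Step.N ∧
       p.2.length = (k - 1) * n ∧ p.2.head? = some Step.E ∧
       (∀ q ∈ vertices p.1 ∩ vertices p.2, q = ((0 : ℤ), (0 : ℤ))) ∧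
       (endpoint p.2).1 - (endpoint p.1).1 = (δ : ℤ) ∧
       kGoodBottom k p.2}

/-- The set `𝒫̃^{k,ε}_{n,δ,m}` of weak `k`-path pairs of distance `δ` with
exactly `m` returns (intersections away from the origin). -/
def WeakPathPairs (k n ε δ m : ℕ) : Set (List Step × List Step) :=
  {p | p.1.length = (k - 1) * n - ε ∧ p.1.head? = some Step.N ∧
       p.2.length = (k - 1) * n ∧ p.2.head? = some Step.E ∧
       weaklyAbove p.1 p.2 ∧
       (endpoint p.2).1 - (endpoint p.1).1 = (δ : ℤ) ∧
       kGoodBottom k p.2 ∧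
       ((vertices p.1 ∩ vertices p.2) \ {((0 : ℤ), (0 : ℤ))}).ncard = m}

/-- The generating function `C_k(t) = ∑_{n≥0} (1/(kn+1)) C(kn+1, n) tⁿ` of the
`k`-Catalan (Fuss–Catalan) numbers, as a formal power series over `ℚ`. -/
def fussCatalanGF (k : ℕ) : PowerSeries ℚ :=
  PowerSeries.mk fun n => (((k * n + 1 : ℕ) : ℚ))⁻¹ * ((k * n + 1).choose n : ℚ)

namespace PathPairScratch
open List
open Step

lemma countE_add_countN (l : List Step) : l.count Step.E + l.count Step.N = l.length := by
  induction l with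
  | nil => rfl
  | cons a t ih => cases a <;> simp [count_cons] <;> omega

lemma count_take_rep_ne {α} [DecidableEq α] {a b : α} (hab : b ≠ a) (m s : ℕ) (w : List α) :
    (((List.replicate m b ++ w).take s).count a) = ((w.take (s - m)).count a) := by
  rw [take_append, count_append, take_replicate, count_replicate,
    length_replicate]
  simp [hab]

lemma count_take_rep_self {α} [DecidableEq α] (a : α) (m s : ℕ) (w : List α) :
    (((List.replicate m a ++ w).take s).count a) = min s m + ((w.take (s - m)).count a) := by
  rw [take_append, count_append, take_replicate, count_replicate,
    length_replicate]
  simp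

def ofB (xs : List ℕ) : List Step := (xs.map fun b => Step.E :: List.replicate b Step.N).flatten

@[simp] lemma ofB_nil : ofB [] = [] := rfl

@[simp] lemma ofB_cons (x : ℕ) (t : List ℕ) :
    ofB (x :: t) = Step.E :: (List.replicate x Step.N ++ ofB t) := by
  simp [ofB]

@[simp] lemma length_ofB (xs : List ℕ) : (ofB xs).length = xs.length + xs.sum := by
  induction xs with
  | nil => rfl
  | cons x t ih => simp [ih]; omega

@[simp] lemma countE_ofB (xs : List ℕ) : (ofB xs).count Step.E = xs.length := by
  induction xs with
  | nil => rfl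
  | cons x t ih =>
    simp [count_cons, count_append, ih, count_replicate]

lemma countE_take_ofB_le_iff (xs : List ℕ) (k s : ℕ) (hk : k < xs.length) :
    ((ofB xs).take s).count Step.E ≤ k ↔ s ≤ k + (xs.take k).sum := by
  induction xs generalizing k s with
  | nil => simp at hk
  | cons x t ih =>
    rw [ofB_cons]
    rcases Nat.eq_zero_or_pos s with hs | hs
    · subst hs; simp
    rw [show (Step.E :: (List.replicate x Step.N ++ ofB t)) = [Step.E] ++ (List.replicate x Step.N ++ ofB t) from rfl]
    rw [show ([Step.E] : List Step) = List.replicate 1 Step.E from rfl]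
    rw [count_take_rep_self, count_take_rep_ne (by simp : Step.N ≠ Step.E)]
    have hmin : min s 1 = 1 := by omega
    rw [hmin]
    rcases Nat.eq_zero_or_pos k with hk0 | hkpos
    · subst hk0
      simp only [take_zero, sum_nil, Nat.add_zero]
      omega
    · obtain ⟨k', rfl⟩ : ∃ k', k = k' + 1 := ⟨k - 1, by omega⟩
      have hk' : k' < t.length := by simp at hk; omega
      have h2 := ih k' (s - 1 - x) hk'
      simp only [take_succ_cons, sum_cons]
      omega


-- L7: prefix-sum domination implies pointwise E-count domination
lemma countE_take_mono {xs ys : List ℕ} (hlen : xs.length = ys.length)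
    (hpre : ∀ i, ((ys.take i).sum ≤ (xs.take i).sum)) (s : ℕ) :
    ((ofB xs).take s).count Step.E ≤ ((ofB ys).take s).count Step.E := by
  by_contra hlt
  push_neg at hlt
  set k := ((ofB ys).take s).count Step.E with hk
  have hky : k < ys.length := by
    by_contra hge
    push_neg at hge
    have h1 : ((ofB xs).take s).count Step.E ≤ (ofB xs).count Step.E :=
      (take_sublist _ _).count_le _
    rw [countE_ofB] at h1
    omega
  have h2 : s ≤ k + (ys.take k).sum := (countE_take_ofB_le_iff ys k s hky).mp le_rfl
  have h3 : s ≤ k + (xs.take k).sum := le_trans h2 (by have := hpre k; omega)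
  have h4 : ((ofB xs).take s).count Step.E ≤ k :=
    (countE_take_ofB_le_iff xs k s (by omega)).mpr h3
  omega

-- L8: converse
lemma prefix_sum_of_countE_take_mono {xs ys : List ℕ} (hlen : xs.length = ys.length)
    (hsum : xs.sum = ys.sum)
    (hmono : ∀ s ≤ xs.length + xs.sum,
      ((ofB xs).take s).count Step.E ≤ ((ofB ys).take s).count Step.E) (i : ℕ) :
    (ys.take i).sum ≤ (xs.take i).sum := by
  rcases le_or_gt xs.length i with hi | hi
  · rw [take_of_length_le hi, take_of_length_le (hlen ▸ hi), hsum]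
  · set s := i + (xs.take i).sum + 1 with hs
    have hsle : s ≤ xs.length + xs.sum := by
      have h1 : (xs.take i).sum ≤ xs.sum := by
        conv_rhs => rw [← take_append_drop i xs]
        rw [sum_append]; omega
      omega
    have hx : ¬ ((ofB xs).take s).count Step.E ≤ i := by
      rw [countE_take_ofB_le_iff xs i s hi]; omega
    have hy : ¬ ((ofB ys).take s).count Step.E ≤ i := by
      have := hmono s hsle; omega
    rw [countE_take_ofB_le_iff ys i s (hlen ▸ hi)] at hy
    omega

-- leading-run utilities
def runLen {α : Type*} [DecidableEq α] (a : α) : List α → ℕ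
  | [] => 0
  | b :: t => if b = a then runLen a t + 1 else 0

def runDrop {α : Type*} [DecidableEq α] (a : α) : List α → List α
  | [] => []
  | b :: t => if b = a then runDrop a t else b :: t

lemma runLen_runDrop {α : Type*} [DecidableEq α] (a : α) (l : List α) :
    l = List.replicate (runLen a l) a ++ runDrop a l := by
  induction l with
  | nil => rfl
  | cons b t ih =>
    by_cases h : b = a
    · subst h; simp [runLen, runDrop, replicate_succ]
      exact ih
    · simp [runLen, runDrop, h]

lemma runDrop_head {α : Type*} [DecidableEq α] (a : α) (l : List α) :
    runDrop a l = [] ∨ ∃ b, b ≠ a ∧ (runDrop a l).head? = some b := by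
  induction l with
  | nil => left; rfl
  | cons b t ih =>
    by_cases h : b = a
    · subst h; simpa [runDrop] using ih
    · right; exact ⟨b, h, by simp [runDrop, h]⟩

lemma runLen_pos {α : Type*} [DecidableEq α] (a : α) (l : List α)
    (h : l.head? = some a) : 1 ≤ runLen a l := by
  cases l with
  | nil => simp at h
  | cons b t => simp at h; subst h; simp [runLen]

lemma runDrop_length_le {α : Type*} [DecidableEq α] (a : α) (l : List α) :
    (runDrop a l).length ≤ l.length := by
  induction l with
  | nil => simp [runDrop]
  | cons b t ih =>
    by_cases h : b = a
    · subst h; simp [runDrop]; omega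
    · simp [runDrop, h]

lemma runLen_replicate_append {α : Type*} [DecidableEq α] (a : α) (m : ℕ) (w : List α)
    (hw : ∀ b, w.head? = some b → b ≠ a) :
    runLen a (List.replicate m a ++ w) = m := by
  induction m with
  | zero =>
    simp only [replicate_zero, nil_append]
    cases w with
    | nil => rfl
    | cons b t =>
      have := hw b (by simp)
      simp [runLen, this]
  | succ m ih => simp [replicate_succ, runLen, ih]

-- L9: ofB injective
lemma ofB_head (xs : List ℕ) (b : Step) (h : (ofB xs).head? = some b) : b = Step.E := by
  cases xs with
  | nil => simp [ofB] at h
  | cons x t => rw [ofB_cons] at h; simp at h; exact h.symm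

lemma ofB_injective : Function.Injective ofB := by
  intro xs ys h
  induction xs generalizing ys with
  | nil =>
    cases ys with
    | nil => rfl
    | cons y t => simp [ofB] at h
  | cons x t ih =>
    cases ys with
    | nil => simp [ofB] at h
    | cons y u =>
      rw [ofB_cons, ofB_cons] at h
      have h' := List.tail_eq_of_cons_eq h
      have hx : runLen Step.N (List.replicate x Step.N ++ ofB t) = x :=
        runLen_replicate_append _ _ _ (fun b hb => by
          have := ofB_head t b hb; simp [this])
      have hy : runLen Step.N (List.replicate y Step.N ++ ofB u) = y :=
        runLen_replicate_append _ _ _ (fun b hb => by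
          have := ofB_head u b hb; simp [this])
      have hxy : x = y := by rw [← hx, ← hy, h']
      subst hxy
      have := List.append_cancel_left (h' : List.replicate x Step.N ++ ofB t = List.replicate x Step.N ++ ofB u)
      rw [ih this]

-- L10: decomposition existence
lemma ofB_exists : ∀ (m : ℕ) (γ : List Step), γ.length ≤ m →
    (γ = [] ∨ γ.head? = some Step.E) → ∃ xs, γ = ofB xs := by
  intro m
  induction m with
  | zero =>
    intro γ hγ _
    interval_cases h : γ.length
    · exact ⟨[], by simpa using (List.length_eq_zero_iff.mp h)⟩
  | succ m ih =>
    intro γ hγ hh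
    rcases hh with rfl | hh
    · exact ⟨[], rfl⟩
    cases γ with
    | nil => exact ⟨[], rfl⟩
    | cons c r =>
      simp at hh
      subst hh
      have hr : r = List.replicate (runLen Step.N r) Step.N ++ runDrop Step.N r :=
        runLen_runDrop _ _
      have hd : runDrop Step.N r = [] ∨ (runDrop Step.N r).head? = some Step.E := by
        rcases runDrop_head Step.N r with h | ⟨b, hb, h⟩
        · left; exact h
        · right; rw [h]; cases b
          · rfl
          · exact absurd rfl hb
      have hlen : (runDrop Step.N r).length ≤ m := by
        have h1 := runDrop_length_le Step.N r
        simp at hγ; omega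
      obtain ⟨t, ht⟩ := ih (runDrop Step.N r) hlen hd
      exact ⟨runLen Step.N r :: t, by rw [ofB_cons, ← ht, ← hr]⟩


lemma inter_iff {γ₁ γ₂ : List Step} (h : γ₁.length = γ₂.length) :
    (∀ q ∈ vertices γ₁ ∩ vertices γ₂, q = ((0 : ℤ), (0 : ℤ))) ↔
    ∀ s, 0 < s → s ≤ γ₁.length →
      (γ₁.take s).count Step.E ≠ (γ₂.take s).count Step.E := by
  constructor
  · intro hint s hs hle heq
    have hlen1 : (γ₁.take s).length = s := by simp; omega
    have hlen2 : (γ₂.take s).length = s := by simp; omega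
    have hN : (γ₁.take s).count Step.N = (γ₂.take s).count Step.N := by
      have e1 := countE_add_countN (γ₁.take s)
      have e2 := countE_add_countN (γ₂.take s)
      omega
    have hq2 : endpoint (γ₁.take s) ∈ vertices γ₂ := by
      refine ⟨s, by omega, ?_⟩
      simp [endpoint, heq, hN]
    have hq1 : endpoint (γ₁.take s) ∈ vertices γ₁ := ⟨s, hle, rfl⟩
    have h0 := hint _ ⟨hq1, hq2⟩
    simp only [endpoint, Prod.mk.injEq] at h0
    have hE0 : (γ₁.take s).count Step.E = 0 := by exact_mod_cast h0.1
    have hN0 : (γ₁.take s).count Step.N = 0 := by exact_mod_cast h0.2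
    have := countE_add_countN (γ₁.take s)
    omega
  · rintro hne q ⟨⟨i, hi, hqi⟩, ⟨j, hj, hqj⟩⟩
    have heq : endpoint (γ₁.take i) = endpoint (γ₂.take j) := hqi.trans hqj.symm
    simp only [endpoint, Prod.mk.injEq] at heq
    have hE : (γ₁.take i).count Step.E = (γ₂.take j).count Step.E := by exact_mod_cast heq.1
    have hN : (γ₁.take i).count Step.N = (γ₂.take j).count Step.N := by exact_mod_cast heq.2
    have e1 := countE_add_countN (γ₁.take i)
    have e2 := countE_add_countN (γ₂.take j)
    have hlen1 : (γ₁.take i).length = i := by simp; omega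
    have hlen2 : (γ₂.take j).length = j := by simp; omega
    have hij : i = j := by omega
    subst hij
    rcases Nat.eq_zero_or_pos i with rfl | hpos
    · rw [← hqi]; simp [endpoint]
    · exact absurd hE (hne i hpos hi)

lemma countE_take_step (l : List Step) (s : ℕ) :
    (l.take s).count Step.E ≤ (l.take (s + 1)).count Step.E ∧
    (l.take (s + 1)).count Step.E ≤ (l.take s).count Step.E + 1 := by
  rw [take_succ, count_append]
  rcases hls : l[s]? with - | a
  · simp
  · cases a <;> simp [Option.toList, count_cons]

lemma lt_of_ne {γ₁ γ₂ : List Step} (h1 : γ₁.head? = some Step.N)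
    (h2 : γ₂.head? = some Step.E)
    (hne : ∀ s, 0 < s → s ≤ γ₁.length →
      (γ₁.take s).count Step.E ≠ (γ₂.take s).count Step.E) :
    ∀ s, 0 < s → s ≤ γ₁.length →
      (γ₁.take s).count Step.E < (γ₂.take s).count Step.E := by
  intro s
  induction s with
  | zero => omega
  | succ s ih =>
    intro _ hle
    rcases Nat.eq_zero_or_pos s with rfl | hpos
    · obtain ⟨t1, rfl⟩ : ∃ t, γ₁ = Step.N :: t := by
        cases γ₁ with
        | nil => simp at h1
        | cons a t => simp at h1; exact ⟨t, by rw [h1]⟩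
      obtain ⟨t2, rfl⟩ : ∃ t, γ₂ = Step.E :: t := by
        cases γ₂ with
        | nil => simp at h2
        | cons a t => simp at h2; exact ⟨t, by rw [h2]⟩
      simp [count_cons]
    · have hlt := ih hpos (by omega)
      have hne' := hne (s + 1) (by omega) hle
      have b1 := countE_take_step γ₁ s
      have b2 := countE_take_step γ₂ s
      omega


def topOf (as : List ℕ) : List Step := Step.N :: (ofB as).tail

lemma topOf_cons (a : ℕ) (t : List ℕ) :
    topOf (a :: t) = Step.N :: (List.replicate a Step.N ++ ofB t) := by
  simp [topOf]

lemma length_topOf (a : ℕ) (t : List ℕ) :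
    (topOf (a :: t)).length = (a :: t).length + (a :: t).sum := by
  simp [topOf_cons]; omega

lemma countE_topOf (a : ℕ) (t : List ℕ) :
    (topOf (a :: t)).count Step.E = t.length := by
  simp [topOf_cons, count_cons, count_append, count_replicate, countE_ofB]

lemma countE_take_topOf (a : ℕ) (t : List ℕ) (s : ℕ) (hs : 1 ≤ s) :
    ((ofB (a :: t)).take s).count Step.E
      = ((topOf (a :: t)).take s).count Step.E + 1 := by
  rw [topOf_cons, ofB_cons]
  rw [show (Step.E :: (List.replicate a Step.N ++ ofB t))
      = List.replicate 1 Step.E ++ (List.replicate a Step.N ++ ofB t) from rfl]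
  rw [show (Step.N :: (List.replicate a Step.N ++ ofB t))
      = List.replicate 1 Step.N ++ (List.replicate a Step.N ++ ofB t) from rfl]
  rw [count_take_rep_self, count_take_rep_ne (show Step.N ≠ Step.E by simp) 1,
    count_take_rep_ne (show Step.N ≠ Step.E by simp) a]
  omega

lemma countE_take_ofB_pos (a : ℕ) (t : List ℕ) (s : ℕ) (hs : 1 ≤ s) :
    1 ≤ ((ofB (a :: t)).take s).count Step.E := by
  rw [ofB_cons]
  rw [show (Step.E :: (List.replicate a Step.N ++ ofB t))
      = List.replicate 1 Step.E ++ (List.replicate a Step.N ++ ofB t) from rfl]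
  rw [count_take_rep_self]
  omega

def TT (n : ℕ) : Set (List ℕ × List ℕ) :=
  {ab | ab.1.length = ab.2.length ∧ ab.2 ≠ [] ∧ ab.1.length + ab.1.sum = n ∧
        ab.1.sum = ab.2.sum ∧ ∀ i, (ab.2.take i).sum ≤ (ab.1.take i).sum}

def toPair (ab : List ℕ × List ℕ) : List Step × List Step := (topOf ab.1, ofB ab.2)

lemma toPair_mem {n : ℕ} (hn : 1 ≤ n) {ab : List ℕ × List ℕ} (h : ab ∈ TT n) :
    toPair ab ∈ PathPairs 2 n 0 1 := by
  obtain ⟨as, bs⟩ := ab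
  obtain ⟨hlen, hbs, hlensum, hsum, hpre⟩ := h
  simp only at hlen hbs hlensum hsum hpre
  obtain ⟨a, t, rfl⟩ : ∃ a t, as = a :: t := by
    cases as with
    | nil => simp at hlen; exact absurd (length_eq_zero_iff.mp hlen.symm) hbs
    | cons a t => exact ⟨a, t, rfl⟩
  obtain ⟨b, u, rfl⟩ : ∃ b u, bs = b :: u := by
    cases bs with
    | nil => exact absurd rfl hbs
    | cons b u => exact ⟨b, u, rfl⟩
  have hlen1 : (topOf (a :: t)).length = n := by rw [length_topOf]; omega
  have hlen2 : (ofB (b :: u)).length = n := by rw [length_ofB]; simp at hlen hlensum hsum ⊢; omega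
  rw [show toPair (a :: t, b :: u) = (topOf (a :: t), ofB (b :: u)) from rfl]
  refine ⟨by simpa using hlen1, rfl, by simpa using hlen2, by rw [ofB_cons]; rfl, ?_, ?_, ?_⟩
  · show ∀ q ∈ vertices (topOf (a :: t)) ∩ vertices (ofB (b :: u)), q = ((0:ℤ), (0:ℤ))
    rw [inter_iff (by rw [hlen1, hlen2])]
    intro s hs hle
    have hmono := countE_take_mono hlen hpre s
    have hshift := countE_take_topOf a t s hs
    have hposE := countE_take_ofB_pos a t s hs
    omega
  · show (endpoint (ofB (b :: u))).1 - (endpoint (topOf (a :: t))).1 = (1 : ℤ)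
    simp only [endpoint, countE_ofB, countE_topOf]
    have : (b :: u).length = t.length + 1 := by simp at hlen ⊢; omega
    rw [this]; push_cast; ring
  · exact ⟨b :: u, by simp [Nat.mod_one], rfl⟩

lemma toPair_surj {n : ℕ} (hn : 1 ≤ n) {p : List Step × List Step}
    (h : p ∈ PathPairs 2 n 0 1) : ∃ ab ∈ TT n, toPair ab = p := by
  obtain ⟨γ₁, γ₂⟩ := p
  obtain ⟨hl1, hh1, hl2, hh2, hint, hdel, hgb⟩ := h
  simp only at hl1 hh1 hl2 hh2 hint hdel hgb
  have hl1' : γ₁.length = n := by simpa using hl1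
  have hl2' : γ₂.length = n := by simpa using hl2
  -- bottom path
  obtain ⟨bs, -, hbs⟩ := hgb
  have hbs' : γ₂ = ofB bs := hbs
  -- top path
  obtain ⟨τ, rfl⟩ : ∃ τ, γ₁ = Step.N :: τ := by
    cases γ₁ with
    | nil => simp at hh1
    | cons c τ => simp at hh1; exact ⟨τ, by rw [hh1]⟩
  have hτ : τ = List.replicate (runLen Step.N τ) Step.N ++ runDrop Step.N τ :=
    runLen_runDrop _ _
  have hdhead : runDrop Step.N τ = [] ∨ (runDrop Step.N τ).head? = some Step.E := by
    rcases runDrop_head Step.N τ with h | ⟨c, hc, h⟩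
    · left; exact h
    · right; rw [h]; cases c
      · rfl
      · exact absurd rfl hc
  obtain ⟨t, ht⟩ := ofB_exists (runDrop Step.N τ).length (runDrop Step.N τ) le_rfl hdhead
  set a := runLen Step.N τ with ha
  have hγ₁ : Step.N :: τ = topOf (a :: t) := by
    rw [topOf_cons, ← ht, ← hτ]
  -- counts
  have hcE1 : (Step.N :: τ).count Step.E = t.length := by rw [hγ₁, countE_topOf]
  have hcE2 : γ₂.count Step.E = bs.length := by rw [hbs', countE_ofB]
  have hlen12 : (a :: t).length = bs.length := by
    simp only [endpoint] at hdel
    rw [hcE1, hcE2] at hdel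
    have : (bs.length : ℤ) = t.length + 1 := by omega
    simp only [length_cons]
    exact_mod_cast this.symm
  have hbsne : bs ≠ [] := by
    intro hbs0
    rw [hbs0] at hbs'
    rw [hbs'] at hl2'
    simp [ofB] at hl2'
    omega
  have hlsum1 : (a :: t).length + (a :: t).sum = n := by
    rw [hγ₁, length_topOf] at hl1'
    exact hl1'
  have hlsum2 : bs.length + bs.sum = n := by
    rw [hbs', length_ofB] at hl2'
    exact hl2'
  have hsum : (a :: t).sum = bs.sum := by omega
  -- prefix sums
  have hne := (inter_iff (by rw [hl1', hl2'])).mp hint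
  have hlt := lt_of_ne (by rfl) (by rw [hbs'] at hh2 ⊢; exact hh2) hne
  have hmono : ∀ s ≤ (a :: t).length + (a :: t).sum,
      ((ofB (a :: t)).take s).count Step.E ≤ ((ofB bs).take s).count Step.E := by
    intro s hsle
    rcases Nat.eq_zero_or_pos s with rfl | hs
    · simp
    have h1 := countE_take_topOf a t s hs
    have h2 := hlt s hs (by rw [hl1']; omega)
    rw [← hγ₁] at h1
    rw [← hbs']
    omega
  have hpre := fun i => prefix_sum_of_countE_take_mono hlen12 hsum hmono i
  exact ⟨(a :: t, bs), ⟨hlen12, hbsne, hlsum1, hsum, hpre⟩, by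
    simp only [toPair]
    rw [← hγ₁, ← hbs']⟩

lemma toPair_inj {n : ℕ} : Set.InjOn toPair (TT n) := by
  rintro ⟨as, bs⟩ hab ⟨as', bs'⟩ hab' heq
  simp only [toPair, Prod.mk.injEq] at heq
  obtain ⟨h1, h2⟩ := heq
  have hbs : bs = bs' := ofB_injective h2
  have hasne : as ≠ [] := by
    intro h0
    have := hab.1
    rw [h0] at this
    exact hab.2.1 (length_eq_zero_iff.mp (by simpa using this.symm))
  have hasne' : as' ≠ [] := by
    intro h0
    have := hab'.1
    rw [h0] at this
    exact hab'.2.1 (length_eq_zero_iff.mp (by simpa using this.symm))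
  obtain ⟨a, t, rfl⟩ : ∃ a t, as = a :: t := by
    cases as with
    | nil => exact absurd rfl hasne
    | cons a t => exact ⟨a, t, rfl⟩
  obtain ⟨a', t', rfl⟩ : ∃ a t, as' = a :: t := by
    cases as' with
    | nil => exact absurd rfl hasne'
    | cons a t => exact ⟨a, t, rfl⟩
  have : ofB (a :: t) = ofB (a' :: t') := by
    rw [topOf_cons, topOf_cons] at h1
    rw [ofB_cons, ofB_cons]
    exact congrArg (Step.E :: ·) (List.tail_eq_of_cons_eq h1)
  rw [ofB_injective this, hbs]


open DyckStep in
def ofB2 (l : List (ℕ × ℕ)) : List DyckStep :=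
  (l.map fun cd => List.replicate (cd.1 + 1) U ++ List.replicate (cd.2 + 1) D).flatten

open DyckStep

@[simp] lemma ofB2_nil : ofB2 [] = [] := rfl

lemma ofB2_cons (a b : ℕ) (t : List (ℕ × ℕ)) :
    ofB2 ((a, b) :: t)
      = List.replicate (a + 1) U ++ (List.replicate (b + 1) D ++ ofB2 t) := by
  simp [ofB2]

@[simp] lemma countU_ofB2 (l : List (ℕ × ℕ)) :
    (ofB2 l).count U = l.length + (l.map Prod.fst).sum := by
  induction l with
  | nil => rfl
  | cons a t ih =>
    obtain ⟨a, b⟩ := a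
    rw [ofB2_cons]
    simp [count_append, count_replicate, ih]
    omega

@[simp] lemma countD_ofB2 (l : List (ℕ × ℕ)) :
    (ofB2 l).count D = l.length + (l.map Prod.snd).sum := by
  induction l with
  | nil => rfl
  | cons a t ih =>
    obtain ⟨a, b⟩ := a
    rw [ofB2_cons]
    simp [count_append, count_replicate, ih]
    omega

lemma countD_take_block (c d s : ℕ) (w : List DyckStep) :
    ((List.replicate c U ++ (List.replicate d D ++ w)).take s).count D
      = min (s - c) d + ((w.take (s - c - d)).count D) := by
  rw [count_take_rep_ne (show U ≠ D by simp), count_take_rep_self]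

lemma countU_take_block (c d s : ℕ) (w : List DyckStep) :
    ((List.replicate c U ++ (List.replicate d D ++ w)).take s).count U
      = min s c + ((w.take (s - c - d)).count U) := by
  rw [count_take_rep_self, count_take_rep_ne (show D ≠ U by simp)]

lemma ofB2_prefix (l : List (ℕ × ℕ)) (k : ℕ)
    (hpre : ∀ i, ((l.map Prod.snd).take i).sum ≤ k + ((l.map Prod.fst).take i).sum) :
    ∀ s, ((ofB2 l).take s).count D ≤ k + ((ofB2 l).take s).count U := by
  induction l generalizing k with
  | nil => simp
  | cons x t ih =>
    obtain ⟨a, b⟩ := x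
    intro s
    have hba : b ≤ k + a := by have := hpre 1; simpa using this
    rw [ofB2_cons, countD_take_block, countU_take_block]
    rcases le_or_gt s (a + 1) with hs | hs
    · have h0 : s - (a + 1) = 0 := by omega
      rw [h0]
      simp
    · have ih' := ih (k + a - b) (fun i => by
        have := hpre (i + 1)
        simp only [map_cons, take_succ_cons, sum_cons] at this
        omega) (s - (a + 1) - (b + 1))
      omega

-- Dyck decomposition
lemma dyck_decomp : ∀ (M : ℕ) (w : List DyckStep), w.length ≤ M → ∀ k : ℕ,
    (w = [] ∨ w.head? = some U) →
    w.count D = w.count U + k →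
    (∀ s, (w.take s).count D ≤ k + (w.take s).count U) →
    ∃ l : List (ℕ × ℕ), w = ofB2 l ∧
      ∀ i, ((l.map Prod.snd).take i).sum ≤ k + ((l.map Prod.fst).take i).sum := by
  intro M
  induction M with
  | zero =>
    intro w hw k _ _ _
    have : w = [] := length_eq_zero_iff.mp (by omega)
    exact ⟨[], by simp [this], by simp⟩
  | succ M ih =>
    intro w hw k hh hcnt hpre
    rcases hh with rfl | hh
    · exact ⟨[], by simp, by simp⟩
    set c := runLen U w with hc
    have hcpos : 1 ≤ c := runLen_pos _ _ hh
    set r := runDrop U w with hr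
    have hwr : w = List.replicate c U ++ r := runLen_runDrop _ _
    have hrhead : r = [] ∨ r.head? = some D := by
      rcases runDrop_head U w with h | ⟨b, hb, h⟩
      · left; exact h
      · right; rw [h]; cases b
        · exact absurd rfl hb
        · rfl
    rcases hrhead with hr0 | hrhead
    · exfalso
      rw [hr0, append_nil] at hwr
      rw [hwr] at hcnt
      simp [count_replicate] at hcnt
      omega
    set d := runLen D r with hd
    have hdpos : 1 ≤ d := runLen_pos _ _ hrhead
    set w' := runDrop D r with hw'
    have hrw : r = List.replicate d D ++ w' := runLen_runDrop _ _
    have hw'head : w' = [] ∨ w'.head? = some U := by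
      rcases runDrop_head D r with h | ⟨b, hb, h⟩
      · left; exact h
      · right; rw [h]; cases b
        · rfl
        · exact absurd rfl hb
    have hwfull : w = List.replicate c U ++ (List.replicate d D ++ w') := by
      rw [hwr, hrw]
    -- d ≤ k + c
    have hdc : d ≤ k + c := by
      have h1 := hpre (c + d)
      rw [hwfull, countD_take_block, countU_take_block] at h1
      simp only [Nat.add_sub_cancel_left] at h1
      rw [Nat.sub_self] at h1
      simp at h1
      omega
    -- counts of w'
    have hcntw' : w'.count D = w'.count U + (k + c - d) := by
      rw [hwfull] at hcnt
      simp [count_append, count_replicate] at hcnt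
      omega
    have hprew' : ∀ s, (w'.take s).count D ≤ (k + c - d) + (w'.take s).count U := by
      intro s
      have h1 := hpre (c + d + s)
      rw [hwfull, countD_take_block, countU_take_block] at h1
      have e1 : c + d + s - c = d + s := by omega
      rw [e1] at h1
      have e2 : d + s - d = s := by omega
      rw [e2] at h1
      have e3 : min (d + s) d = d := by omega
      have e4 : min (c + d + s) c = c := by omega
      rw [e3, e4] at h1
      omega
    have hlenw' : w'.length ≤ M := by
      have : w.length = c + (d + w'.length) := by
        rw [hwfull]; simp
      omega
    obtain ⟨l', hl1, hl2⟩ := ih w' hlenw' (k + c - d) hw'head hcntw' hprew'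
    refine ⟨(c - 1, d - 1) :: l', ?_, ?_⟩
    · rw [ofB2_cons]
      have e1 : c - 1 + 1 = c := by omega
      have e2 : d - 1 + 1 = d := by omega
      rw [e1, e2, ← hl1, hwfull]
    · intro i
      cases i with
      | zero => simp
      | succ i =>
        have := hl2 i
        simp only [map_cons, take_succ_cons, sum_cons]
        omega

lemma ofB2_head (l : List (ℕ × ℕ)) (b : DyckStep) (h : (ofB2 l).head? = some b) : b = U := by
  cases l with
  | nil => simp [ofB2] at h
  | cons x t =>
    obtain ⟨a, b'⟩ := x
    rw [ofB2_cons] at h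
    rw [show (a + 1) = a + 1 from rfl, replicate_succ] at h
    simp at h
    exact h.symm

lemma ofB2_injective : Function.Injective ofB2 := by
  intro l l' h
  induction l generalizing l' with
  | nil =>
    cases l' with
    | nil => rfl
    | cons y u =>
      obtain ⟨a, b⟩ := y
      rw [ofB2_cons] at h
      simp [replicate_succ] at h
  | cons x t iht =>
    obtain ⟨a, b⟩ := x
    cases l' with
    | nil =>
      rw [ofB2_cons] at h
      simp [replicate_succ] at h
    | cons y u =>
      obtain ⟨a', b'⟩ := y
      rw [ofB2_cons, ofB2_cons] at h
      have hheadD : ∀ (m : ℕ) (v : List DyckStep) (bb : DyckStep),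
          (List.replicate (m + 1) D ++ v).head? = some bb → bb ≠ U := by
        intro m v bb hbb
        rw [replicate_succ] at hbb
        simp at hbb
        simp [← hbb]
      have ha : a + 1 = a' + 1 := by
        have h1 : runLen U (ofB2 ((a, b) :: t)) = a + 1 := by
          rw [ofB2_cons]; exact runLen_replicate_append _ _ _ (hheadD b (ofB2 t))
        have h2 : runLen U (ofB2 ((a', b') :: u)) = a' + 1 := by
          rw [ofB2_cons]; exact runLen_replicate_append _ _ _ (hheadD b' (ofB2 u))
        rw [ofB2_cons] at h1 h2
        rw [← h1, ← h2, h]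
      obtain rfl : a = a' := by omega
      have h' : List.replicate (b + 1) D ++ ofB2 t = List.replicate (b' + 1) D ++ ofB2 u :=
        List.append_cancel_left h
      have hheadU : ∀ (v : List (ℕ × ℕ)) (bb : DyckStep),
          (ofB2 v).head? = some bb → bb ≠ D := by
        intro v bb hbb
        rw [ofB2_head v bb hbb]
        simp
      have hb : b + 1 = b' + 1 := by
        have h1 : runLen D (List.replicate (b + 1) D ++ ofB2 t) = b + 1 :=
          runLen_replicate_append _ _ _ (hheadU t)
        have h2 : runLen D (List.replicate (b' + 1) D ++ ofB2 u) = b' + 1 :=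
          runLen_replicate_append _ _ _ (hheadU u)
        rw [← h1, ← h2, h']
      obtain rfl : b = b' := by omega
      rw [iht (List.append_cancel_left h')]

lemma zip_map_fst_snd' (l : List (ℕ × ℕ)) :
    List.zip (l.map Prod.fst) (l.map Prod.snd) = l := by
  induction l with
  | nil => rfl
  | cons a t ih => simp [ih]


def toDyck (ab : List ℕ × List ℕ) : List DyckStep := ofB2 (ab.1.zip ab.2)

lemma toDyck_spec {n : ℕ} {ab : List ℕ × List ℕ} (h : ab ∈ TT n) :
    (toDyck ab).count U = n ∧ (toDyck ab).count D = n ∧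
    ∀ i, ((toDyck ab).take i).count D ≤ ((toDyck ab).take i).count U := by
  obtain ⟨as, bs⟩ := ab
  obtain ⟨hlen, hbs, hlensum, hsum, hpre⟩ := h
  simp only at hlen hbs hlensum hsum hpre
  have hzf : (as.zip bs).map Prod.fst = as := map_fst_zip (le_of_eq hlen)
  have hzs : (as.zip bs).map Prod.snd = bs := map_snd_zip (ge_of_eq hlen)
  have hzl : (as.zip bs).length = as.length := by rw [length_zip, hlen, min_self]
  refine ⟨?_, ?_, ?_⟩
  · show (ofB2 (as.zip bs)).count U = n
    rw [countU_ofB2, hzf, hzl]; exact hlensum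
  · show (ofB2 (as.zip bs)).count D = n
    rw [countD_ofB2, hzs, hzl]; omega
  · intro i
    have := ofB2_prefix (as.zip bs) 0 (fun j => by
      rw [hzf, hzs]; simpa using hpre j) i
    simpa [toDyck] using this

def toDyckWord {n : ℕ} (ab : List ℕ × List ℕ) (h : ab ∈ TT n) : DyckWord :=
  ⟨toDyck ab, by
    have hs := toDyck_spec h
    omega, fun i => (toDyck_spec h).2.2 i⟩

lemma toDyckWord_semilength {n : ℕ} (ab : List ℕ × List ℕ) (h : ab ∈ TT n) :
    (toDyckWord ab h).semilength = n := (toDyck_spec h).1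

lemma card_TT (n : ℕ) (hn : 1 ≤ n) :
    Nat.card ↥(TT n) = Nat.card { p : DyckWord // p.semilength = n } := by
  apply Nat.card_eq_of_bijective (fun x : ↥(TT n) =>
    (⟨toDyckWord x.1 x.2, toDyckWord_semilength x.1 x.2⟩ :
      { p : DyckWord // p.semilength = n }))
  constructor
  · rintro ⟨⟨as, bs⟩, hx⟩ ⟨⟨as', bs'⟩, hy⟩ hxy
    have hto : toDyck (as, bs) = toDyck (as', bs') := by
      have := congrArg (fun z => (Subtype.val z).toList) hxy
      exact this
    have hzip : as.zip bs = as'.zip bs' := ofB2_injective hto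
    have h1 : as = as' := by
      rw [← map_fst_zip (l₁ := as) (l₂ := bs) (le_of_eq hx.1), ← map_fst_zip (l₁ := as') (l₂ := bs') (le_of_eq hy.1), hzip]
    have h2 : bs = bs' := by
      rw [← map_snd_zip (l₁ := as) (l₂ := bs) (ge_of_eq hx.1), ← map_snd_zip (l₁ := as') (l₂ := bs') (ge_of_eq hy.1), hzip]
    exact Subtype.ext (by rw [Prod.mk.injEq]; exact ⟨h1, h2⟩)
  · rintro ⟨p, hp⟩
    set w := p.toList with hwdef
    have hcU : w.count U = n := hp
    have hw0 : w ≠ [] := by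
      intro h0
      rw [h0] at hcU
      simp at hcU
      omega
    have hh : w.head? = some U := by
      rw [List.head?_eq_head hw0, p.head_eq_U hw0]
    have hcnt : w.count D = w.count U + 0 := by
      rw [Nat.add_zero]; exact p.count_U_eq_count_D.symm
    have hpre : ∀ s, (w.take s).count D ≤ 0 + (w.take s).count U := by
      intro s; simpa using p.count_D_le_count_U s
    obtain ⟨l, hl, hlpre⟩ := dyck_decomp w.length w le_rfl 0 (Or.inr hh) hcnt hpre
    have hl0 : l ≠ [] := by
      intro h0
      rw [h0] at hl
      exact hw0 (by simpa using hl)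
    have hzip : (l.map Prod.fst).zip (l.map Prod.snd) = l := zip_map_fst_snd' l
    have hcU' : l.length + (l.map Prod.fst).sum = n := by
      rw [hl, countU_ofB2] at hcU; exact hcU
    have hcD' : l.length + (l.map Prod.snd).sum = n := by
      have : w.count D = n := by omega
      rw [hl, countD_ofB2] at this; exact this
    have hmem : (l.map Prod.fst, l.map Prod.snd) ∈ TT n := by
      refine ⟨by simp, by simp [hl0], by simpa using hcU', ?_, fun i => by
        simpa using hlpre i⟩
      show (l.map Prod.fst).sum = (l.map Prod.snd).sum
      omega
    refine ⟨⟨(l.map Prod.fst, l.map Prod.snd), hmem⟩, ?_⟩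
    apply Subtype.ext
    apply DyckWord.ext
    show toDyck (l.map Prod.fst, l.map Prod.snd) = w
    show ofB2 ((l.map Prod.fst).zip (l.map Prod.snd)) = w
    rw [hzip, ← hl]

lemma card_PP (n : ℕ) (hn : 1 ≤ n) :
    Nat.card ↥(TT n) = Nat.card ↥(PathPairs 2 n 0 1) := by
  apply Nat.card_eq_of_bijective (fun x : ↥(TT n) =>
    (⟨toPair x.1, toPair_mem hn x.2⟩ : ↥(PathPairs 2 n 0 1)))
  constructor
  · rintro ⟨x, hx⟩ ⟨y, hy⟩ hxy
    have : toPair x = toPair y := congrArg Subtype.val hxy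
    exact Subtype.ext (toPair_inj hx hy this)
  · rintro ⟨p, hp⟩
    obtain ⟨ab, hab, habp⟩ := toPair_surj hn hp
    exact ⟨⟨ab, hab⟩, Subtype.ext habp⟩

end PathPairScratch

/-- The number of path pairs of length `n` and distance `1` is the `n`-th
Catalan number `C_n = (1/(n+1)) C(2n, n)`. -/
theorem pathPair_catalan (n : ℕ) (hn : 1 ≤ n) :
    (PathPairs 2 n 0 1).ncard = catalan n ∧
    ((PathPairs 2 n 0 1).ncard : ℚ) = 1 / ((n : ℚ) + 1) * ((2 * n).choose n : ℚ) := by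
  have key : (PathPairs 2 n 0 1).ncard = catalan n := by
    rw [← Nat.card_coe_set_eq, ← PathPairScratch.card_PP n hn, PathPairScratch.card_TT n hn,
      Nat.card_eq_fintype_card, DyckWord.card_dyckWord_semilength_eq_catalan]
  refine ⟨key, ?_⟩
  rw [key]
  have h2 : (n + 1) * catalan n = (2 * n).choose n := by
    rw [succ_mul_catalan_eq_centralBinom, Nat.centralBinom_eq_two_mul_choose]
  have hcast : ((n : ℚ) + 1) * (catalan n : ℚ) = ((2 * n).choose n : ℚ) := by
    exact_mod_cast congrArg (Nat.cast : ℕ → ℚ) h2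
  have hne : (n : ℚ) + 1 ≠ 0 := by positivity
  rw [← hcast]
  field_simp
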